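/- Let P ⊆ ℝ^n be a polytope of dimension d. Then there exist p ∈ ℕ, reals β_1,…,β_p, and simplices S_1,…,S_p ⊆ ℝ^n, each of dimension at most d, such that the support functions satisfy f_P(x) = Σ_{i=1}^p β_i f_{S_i}(x) for all x ∈ ℝ^n. -/

import Mathlib

open Pointwise

noncomputable section SparseMaxout

/-- Vectors in `ℝ^n`. -/
abbrev Vec (n : ℕ) := Fin n → ℝ

/-- A polytope is the convex hull of a finite nonempty set of points. -/
def IsPolytope {n : ℕ} (P : Set (Vec n)) : Prop :=
  ∃ s : Finset (Vec n), s.Nonempty ∧ P = convexHull ℝ (s : Set (Vec n))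

/-- A simplex is the convex hull of a finite nonempty affinely independent set of points. -/
def IsSimplex {n : ℕ} (S : Set (Vec n)) : Prop :=
  ∃ (k : ℕ) (pts : Fin k → Vec n), 0 < k ∧ AffineIndependent ℝ pts ∧
    S = convexHull ℝ (Set.range pts)

/-- The support function `f_P(x) = max_{a ∈ P} ⟨a, x⟩` of a set `P`. -/
def suppFn {n : ℕ} (P : Set (Vec n)) (x : Vec n) : ℝ :=
  sSup ((fun a => ∑ i, a i * x i) '' P)

/-- The dimension of a polytope: the dimension of its affine hull. -/
def polyDim {n : ℕ} (P : Set (Vec n)) : ℕ :=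
  Module.finrank ℝ (affineSpan ℝ P).direction

/-- A (representative of a) virtual polytope: a pair `(P, Q)` standing for `P - Q`. -/
abbrev VP (n : ℕ) := Set (Vec n) × Set (Vec n)

/-- Two pairs represent the same virtual polytope: `P₁ - Q₁ = P₂ - Q₂` iff
`P₁ + Q₂ = P₂ + Q₁` (Minkowski sums). -/
def vEquiv {n : ℕ} (A B : VP n) : Prop :=
  A.1 + B.2 = B.1 + A.2

/-- Both components are polytopes. -/
def IsPolyPair {n : ℕ} (A : VP n) : Prop :=
  IsPolytope A.1 ∧ IsPolytope A.2

/-- Scalar multiple of a virtual polytope: `λ(P - Q) := λP - λQ`. -/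
def vSMul {n : ℕ} (c : ℝ) (A : VP n) : VP n := (c • A.1, c • A.2)

/-- Convex hull of finitely many virtual polytopes:
`conv(P₁-Q₁, …, P_m-Q_m) := conv(⋃ᵢ (Pᵢ + Σ_{k≠i} Q_k)) - Σ_k Q_k`. -/
def vConv {n m : ℕ} (V : Fin m → VP n) : VP n :=
  (convexHull ℝ (⋃ i, ((V i).1 + ∑ k ∈ Finset.univ.erase i, (V k).2)),
   ∑ k, (V k).2)

/-- The dimension of a virtual polytope: `min{dim(A + B) : V = A - B}` over
polytope representations. -/
def vDim {n : ℕ} (V : VP n) : ℕ :=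
  sInf {m | ∃ A B : Set (Vec n), IsPolytope A ∧ IsPolytope B ∧
    vEquiv (A, B) V ∧ polyDim (A + B) = m}

/-- Support function of a virtual polytope: `f_{P-Q} := f_P - f_Q`. -/
def vSuppFn {n : ℕ} (V : VP n) (x : Vec n) : ℝ :=
  suppFn V.1 x - suppFn V.2 x

/-- The recursively defined classes `Q̂_ℓ` of virtual polytopes dual to sparse maxout
networks with indegree constraints `d` and ranks `r` (layer `k` uses `d k`, `r k`);
membership is up to equality of virtual polytopes. -/
def Qhat (n : ℕ) (d r : ℕ → ℕ) : ℕ → Set (VP n)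
  | 0 => {V | IsPolyPair V ∧ ∃ v : Vec n, vEquiv V ({v}, {0})}
  | (k+1) => {V | IsPolyPair V ∧
      ∃ (α : Fin (r (k+1)) → Fin (d (k+1)) → ℝ) (W : Fin (d (k+1)) → VP n),
        (∀ j, W j ∈ Qhat n d r k) ∧
        vEquiv V (vConv (fun i => ∑ j, vSMul (α i j) (W j)))}

/-- `Q_n(ℓ,d,r)`: finite real linear combinations of elements of `Q̂_ℓ`. -/
def Qfull (n : ℕ) (d r : ℕ → ℕ) (ℓ : ℕ) : Set (VP n) :=
  {V | IsPolyPair V ∧ ∃ (p : ℕ) (c : Fin p → ℝ) (W : Fin p → VP n),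
    (∀ i, W i ∈ Qhat n d r ℓ) ∧ vEquiv V (∑ i, vSMul (c i) (W i))}

/-- `m_ℓ = Σ_{k=1}^ℓ (r_k - 1) ∏_{i=k+1}^ℓ d_i`. -/
def mval (d r : ℕ → ℕ) (ℓ : ℕ) : ℕ :=
  ∑ k ∈ Finset.Icc 1 ℓ, (r k - 1) * ∏ i ∈ Finset.Icc (k+1) ℓ, d i

/-- The recursively defined classes `N̂_ℓ` of functions computed by a single output
neuron of an indegree-`d`-constrained rank-`r` maxout network with `ℓ` hidden layers. -/
def Nhat (n : ℕ) (d r : ℕ → ℕ) : ℕ → Set ((Vec n) → ℝ)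
  | 0 => {f | ∃ v : Vec n, f = fun x => ∑ i, v i * x i}
  | (k+1) => {f | ∃ (α : Fin (r (k+1)) → Fin (d (k+1)) → ℝ)
      (g : Fin (d (k+1)) → (Vec n) → ℝ),
      (∀ j, g j ∈ Nhat n d r k) ∧
      f = fun x => ⨆ i, ∑ j, α i j * g j x}

/-- `N_n(ℓ,d,r)`: finite real linear combinations of functions in `N̂_ℓ`. -/
def Nfull (n : ℕ) (d r : ℕ → ℕ) (ℓ : ℕ) : Set ((Vec n) → ℝ) :=
  {f | ∃ (p : ℕ) (c : Fin p → ℝ) (g : Fin p → (Vec n) → ℝ),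
    (∀ i, g i ∈ Nhat n d r ℓ) ∧ f = fun x => ∑ i, c i * g i x}

/-- Unconstrained single-neuron classes `N̂_ℓ` (no indegree constraint). -/
def NhatU (n : ℕ) (r : ℕ → ℕ) : ℕ → Set ((Vec n) → ℝ)
  | 0 => {f | ∃ v : Vec n, f = fun x => ∑ i, v i * x i}
  | (k+1) => {f | ∃ (m : ℕ) (α : Fin (r (k+1)) → Fin m → ℝ)
      (g : Fin m → (Vec n) → ℝ),
      (∀ j, g j ∈ NhatU n r k) ∧
      f = fun x => ⨆ i, ∑ j, α i j * g j x}

/-- `N_n(ℓ,r)`: finite real linear combinations of functions in the unconstrained `N̂_ℓ`. -/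
def NfullU (n : ℕ) (r : ℕ → ℕ) (ℓ : ℕ) : Set ((Vec n) → ℝ) :=
  {f | ∃ (p : ℕ) (c : Fin p → ℝ) (g : Fin p → (Vec n) → ℝ),
    (∀ i, g i ∈ NhatU n r ℓ) ∧ f = fun x => ∑ i, c i * g i x}

/-- `MAX_n(m)`: finite real linear combinations of maxima of at most `m` linear functions. -/
def MAXn (n m : ℕ) : Set ((Vec n) → ℝ) :=
  {f | ∃ (p : ℕ) (β : Fin p → ℝ) (a : Fin p → Fin m → Vec n),
    f = fun x => ∑ i, β i * ⨆ j, ∑ t, a i j t * x t}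
namespace SMAux

open Finset

variable {n : ℕ}

def lin (x v : Vec n) : ℝ := ∑ i, v i * x i

lemma lin_isLinearMap (x : Vec n) : IsLinearMap ℝ (lin x) := by
  constructor
  · intro a b; simp [lin, add_mul, Finset.sum_add_distrib]
  · intro c a; simp [lin, Finset.mul_sum, mul_assoc]

noncomputable def Fm (t : Finset (Vec n)) (x : Vec n) : ℝ :=
  if h : t.Nonempty then t.sup' h (lin x) else 0

lemma Fm_eq (t : Finset (Vec n)) (h : t.Nonempty) (x : Vec n) :
    Fm t x = t.sup' h (lin x) := dif_pos h

lemma suppFn_convexHull (t : Finset (Vec n)) (h : t.Nonempty) (x : Vec n) :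
    suppFn (convexHull ℝ (t : Set (Vec n))) x = t.sup' h (lin x) := by
  have hub : ∀ a ∈ convexHull ℝ (t : Set (Vec n)), lin x a ≤ t.sup' h (lin x) := by
    intro a ha
    have hsub : convexHull ℝ (t : Set (Vec n)) ⊆ {w | lin x w ≤ t.sup' h (lin x)} :=
      convexHull_min (fun v hv => Finset.le_sup' (lin x) (by exact_mod_cast hv))
        (convex_halfSpace_le (lin_isLinearMap x) _)
    exact hsub ha
  obtain ⟨v, hv, hveq⟩ := Finset.exists_mem_eq_sup' h (lin x)
  refine IsGreatest.csSup_eq ⟨⟨v, subset_convexHull ℝ _ (by exact_mod_cast hv), ?_⟩, ?_⟩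
  · rw [hveq]; rfl
  · rintro y ⟨a, ha, rfl⟩
    exact hub a ha

lemma fold_max_base {α : Type*} [DecidableEq α] (f : α → ℝ) (E : Finset α) :
    ∀ (a m : ℝ), E.fold max (max a m) f = max a (E.fold max m f) := by
  induction E using Finset.induction_on with
  | empty => intro a m; simp
  | insert _ _ hb ih =>
    intro a m
    rw [Finset.fold_insert hb, Finset.fold_insert hb, ih, max_left_comm]

lemma fold_max_eq {α : Type*} [DecidableEq α] (f : α → ℝ) (E : Finset α) :
    ∀ (m : ℝ), E.fold max m f = if h : E.Nonempty then max m (E.sup' h f) else m := by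
  induction E using Finset.induction_on with
  | @insert b E hb ih =>
    intro m
    rw [Finset.fold_insert hb, ih]
    by_cases h : E.Nonempty
    · rw [dif_pos h, dif_pos (Finset.insert_nonempty b E), Finset.sup'_insert]
      rw [max_left_comm]
    · have hE : E = ∅ := Finset.not_nonempty_iff_eq_empty.mp h
      subst hE; simp [max_comm]
  | empty => intro m; simp

lemma real_key (μ c m : ℝ) :
    max 0 (min c μ - m) = max 0 (μ - m) - max 0 (μ - max c m) := by
  rcases le_total c μ with h1 | h1 <;> rcases le_total μ m with h2 | h2 <;>
    rcases le_total c m with h3 | h3 <;>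
    simp [max_def, min_def] <;> split_ifs <;> linarith

lemma alt_sum {α : Type*} [DecidableEq α] (f : α → ℝ) (B : Finset α) :
    ∀ (m : ℝ), ∑ E ∈ B.powerset, (-1:ℝ)^E.card * E.fold max m f
      = if hB : B.Nonempty then -max 0 (B.inf' hB f - m) else m := by
  induction B using Finset.induction_on with
  | empty => intro m; simp
  | @insert b B hb ih =>
    intro m
    have hdisj : Disjoint B.powerset (B.powerset.image (insert b)) := by
      rw [Finset.disjoint_left]
      intro E hE hE'
      rw [Finset.mem_powerset] at hE
      obtain ⟨E', _, rfl⟩ := Finset.mem_image.mp hE'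
      exact hb (hE (Finset.mem_insert_self b E'))
    have hinj : ∀ E₁ ∈ B.powerset, ∀ E₂ ∈ B.powerset,
        insert b E₁ = insert b E₂ → E₁ = E₂ := by
      intro E₁ h₁ E₂ h₂ heq
      rw [Finset.mem_powerset] at h₁ h₂
      have hb₁ : b ∉ E₁ := fun h => hb (h₁ h)
      have hb₂ : b ∉ E₂ := fun h => hb (h₂ h)
      rw [← Finset.erase_insert hb₁, heq, Finset.erase_insert hb₂]
    rw [Finset.powerset_insert, Finset.sum_union hdisj, Finset.sum_image hinj]
    have hfold : ∀ E ∈ B.powerset, (-1:ℝ)^(insert b E).card * (insert b E).fold max m f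
        = -((-1:ℝ)^E.card * E.fold max (max (f b) m) f) := by
      intro E hE
      rw [Finset.mem_powerset] at hE
      have hbE : b ∉ E := fun h => hb (hE h)
      rw [Finset.card_insert_of_notMem hbE, Finset.fold_insert hbE, fold_max_base]
      ring
    rw [Finset.sum_congr rfl hfold, Finset.sum_neg_distrib, ih, ih]
    by_cases hB : B.Nonempty
    · rw [dif_pos hB, dif_pos hB, dif_pos (Finset.insert_nonempty b B),
        Finset.inf'_insert (H := hB)]
      have := real_key (B.inf' hB f) (f b) m
      have hmin : (f b ⊓ B.inf' hB f) = min (f b) (B.inf' hB f) := rfl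
      rw [hmin]
      linarith
    · have hBe : B = ∅ := Finset.not_nonempty_iff_eq_empty.mp hB
      subst hBe
      rw [dif_neg hB, dif_neg hB, dif_pos (Finset.insert_nonempty b ∅)]
      have hone : (insert b (∅ : Finset α)).inf' (Finset.insert_nonempty b ∅) f = f b := by
        simp
      rw [hone]
      rcases le_total (f b) m with h | h <;>
        simp [max_def] <;> split_ifs <;> linarith

lemma key_vanish (s A B : Finset (Vec n)) (hAs : A ⊆ s) (hBs : B ⊆ s)
    (hAB : Disjoint A B) (hA : A.Nonempty) (hB : B.Nonempty)
    (z : Vec n) (hzA : z ∈ convexHull ℝ (A : Set (Vec n)))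
    (hzB : z ∈ convexHull ℝ (B : Set (Vec n))) (x : Vec n) :
    ∑ D ∈ B.powerset, (-1:ℝ)^D.card * Fm (s \ D) x = 0 := by
  classical
  have hsBA : A ⊆ s \ B := by
    intro a ha
    exact Finset.mem_sdiff.mpr ⟨hAs ha, fun hb => Finset.disjoint_left.mp hAB ha hb⟩
  have hsB : (s \ B).Nonempty := hA.mono hsBA
  set m := (s \ B).sup' hsB (lin x) with hm
  have hterm : ∀ D ∈ B.powerset, Fm (s \ D) x = (B \ D).fold max m (lin x) := by
    intro D hD
    rw [Finset.mem_powerset] at hD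
    have hsd : s \ D = (s \ B) ∪ (B \ D) := by
      ext v
      simp only [Finset.mem_sdiff, Finset.mem_union]
      constructor
      · rintro ⟨hv, hvD⟩
        by_cases hvB : v ∈ B
        · exact Or.inr ⟨hvB, hvD⟩
        · exact Or.inl ⟨hv, hvB⟩
      · rintro (⟨hv, hvB⟩ | ⟨hvB, hvD⟩)
        · exact ⟨hv, fun h => hvB (hD h)⟩
        · exact ⟨hBs hvB, hvD⟩
    rw [fold_max_eq]
    by_cases hBD : (B \ D).Nonempty
    · rw [dif_pos hBD, hsd, Fm_eq _ (hsB.mono Finset.subset_union_left),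
        Finset.sup'_union hsB hBD]
    · have hBDe : B \ D = ∅ := Finset.not_nonempty_iff_eq_empty.mp hBD
      rw [dif_neg hBD, hsd, hBDe, Finset.union_empty, Fm_eq _ hsB]
  rw [Finset.sum_congr rfl (fun D hD => by rw [hterm D hD])]
  have hre : ∑ D ∈ B.powerset, (-1:ℝ)^D.card * (B \ D).fold max m (lin x)
      = ∑ E ∈ B.powerset, (-1:ℝ)^(B.card - E.card) * E.fold max m (lin x) := by
    refine Finset.sum_nbij' (fun D => B \ D) (fun E => B \ E) ?_ ?_ ?_ ?_ ?_
    · intro D hD; exact Finset.mem_powerset.mpr (Finset.sdiff_subset)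
    · intro E hE; exact Finset.mem_powerset.mpr (Finset.sdiff_subset)
    · intro D hD
      exact Finset.sdiff_sdiff_eq_self (Finset.mem_powerset.mp hD)
    · intro E hE
      exact Finset.sdiff_sdiff_eq_self (Finset.mem_powerset.mp hE)
    · intro D hD
      rw [Finset.mem_powerset] at hD
      congr 2
      rw [Finset.card_sdiff_of_subset hD]
      have := Finset.card_le_card hD
      omega
  rw [hre]
  have hsign : ∀ E ∈ B.powerset, (-1:ℝ)^(B.card - E.card) * E.fold max m (lin x)
      = (-1:ℝ)^B.card * ((-1:ℝ)^E.card * E.fold max m (lin x)) := by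
    intro E hE
    rw [Finset.mem_powerset] at hE
    have hle := Finset.card_le_card hE
    have h1 : (-1:ℝ)^(B.card - E.card) * (-1:ℝ)^E.card = (-1:ℝ)^B.card := by
      rw [← pow_add]; congr 1; omega
    have h2 : ((-1:ℝ)^E.card) * ((-1:ℝ)^E.card) = 1 := by
      rw [← mul_pow]; norm_num
    have h3 : (-1:ℝ)^(B.card - E.card) = (-1:ℝ)^B.card * (-1:ℝ)^E.card := by
      calc (-1:ℝ)^(B.card - E.card)
          = (-1:ℝ)^(B.card - E.card) * ((-1:ℝ)^E.card * (-1:ℝ)^E.card) := by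
            rw [h2, mul_one]
        _ = ((-1:ℝ)^(B.card - E.card) * (-1:ℝ)^E.card) * (-1:ℝ)^E.card := by ring
        _ = (-1:ℝ)^B.card * (-1:ℝ)^E.card := by rw [h1]
    rw [h3, mul_assoc]
  rw [Finset.sum_congr rfl hsign, ← Finset.mul_sum, alt_sum, dif_pos hB]
  have hμ : B.inf' hB (lin x) ≤ m := by
    have h1 : B.inf' hB (lin x) ≤ lin x z := by
      have hsub : convexHull ℝ (B : Set (Vec n)) ⊆ {w | B.inf' hB (lin x) ≤ lin x w} :=
        convexHull_min (fun v hv => Finset.inf'_le (lin x) (by exact_mod_cast hv))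
          (convex_halfSpace_ge (lin_isLinearMap x) _)
      exact hsub hzB
    have h2 : lin x z ≤ A.sup' hA (lin x) := by
      have hsub : convexHull ℝ (A : Set (Vec n)) ⊆ {w | lin x w ≤ A.sup' hA (lin x)} :=
        convexHull_min (fun v hv => Finset.le_sup' (lin x) (by exact_mod_cast hv))
          (convex_halfSpace_le (lin_isLinearMap x) _)
      exact hsub hzA
    have h3 : A.sup' hA (lin x) ≤ m :=
      Finset.sup'_le hA (lin x) (fun v hv => Finset.le_sup' (lin x) (hsBA hv))
    linarith
  have hzero : max 0 (B.inf' hB (lin x) - m) = 0 := max_eq_left (by linarith)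
  rw [hzero]
  ring

lemma decomp (s A B : Finset (Vec n)) (hAs : A ⊆ s) (hBs : B ⊆ s)
    (hAB : Disjoint A B) (hA : A.Nonempty) (hB : B.Nonempty)
    (z : Vec n) (hzA : z ∈ convexHull ℝ (A : Set (Vec n)))
    (hzB : z ∈ convexHull ℝ (B : Set (Vec n))) :
    Fm s = ∑ D ∈ B.powerset.erase ∅, ((-1:ℝ)^(D.card + 1)) • Fm (s \ D) := by
  classical
  funext x
  have hkey := key_vanish s A B hAs hBs hAB hA hB z hzA hzB x
  have hsplit : ((-1:ℝ)^(∅ : Finset (Vec n)).card * Fm (s \ ∅) x)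
      + ∑ D ∈ B.powerset.erase ∅, (-1:ℝ)^D.card * Fm (s \ D) x
      = ∑ D ∈ B.powerset, (-1:ℝ)^D.card * Fm (s \ D) x :=
    Finset.add_sum_erase _ (fun D => (-1:ℝ)^D.card * Fm (s \ D) x)
      (Finset.empty_mem_powerset B)
  simp only [Finset.card_empty, pow_zero, one_mul, Finset.sdiff_empty] at hsplit
  rw [Finset.sum_apply]
  have : ∀ D ∈ B.powerset.erase ∅,
      (((-1:ℝ)^(D.card + 1)) • Fm (s \ D)) x = -((-1:ℝ)^D.card * Fm (s \ D) x) := by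
    intro D hD
    simp only [Pi.smul_apply, smul_eq_mul, pow_succ]
    ring
  rw [Finset.sum_congr rfl this, Finset.sum_neg_distrib]
  linarith [hsplit, hkey]

def genSet (s₀ : Finset (Vec n)) : Set ((Vec n) → ℝ) :=
  {g | ∃ t : Finset (Vec n), t ⊆ s₀ ∧ t.Nonempty ∧
        AffineIndependent ℝ (Subtype.val : {v : Vec n // v ∈ t} → Vec n) ∧ g = Fm t}

lemma span_lemma (s₀ : Finset (Vec n)) :
    ∀ (N : ℕ) (s : Finset (Vec n)), s.card ≤ N → s.Nonempty → s ⊆ s₀ →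
      Fm s ∈ Submodule.span ℝ (genSet s₀) := by
  intro N
  induction N with
  | zero =>
    intro s hc hne _
    have := Finset.Nonempty.card_pos hne
    omega
  | succ N ih =>
    intro s hc hne hsub
    classical
    by_cases hind : AffineIndependent ℝ (Subtype.val : {v : Vec n // v ∈ s} → Vec n)
    · exact Submodule.subset_span ⟨s, hsub, hne, hind, rfl⟩
    · have hind' : ¬ AffineIndependent ℝ (Subtype.val : {v : Vec n // v ∈ s} → Vec n) := by
        intro h
        exact hind h
      obtain ⟨I, z, hzc, hzi⟩ := Convex.radon_partition (𝕜 := ℝ) hind'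
      set A : Finset (Vec n) :=
        s.filter (fun v => ∃ h : v ∈ s, (⟨v, h⟩ : {v : Vec n // v ∈ s}) ∈ I)
        with hAdef
      set B : Finset (Vec n) :=
        s.filter (fun v => ∃ h : v ∈ s, (⟨v, h⟩ : {v : Vec n // v ∈ s}) ∉ I)
        with hBdef
      have hAset : (A : Set (Vec n)) = Subtype.val '' I := by
        ext v
        simp only [hAdef, Finset.coe_filter, Set.mem_setOf_eq, Set.mem_image]
        constructor
        · rintro ⟨hv, h, hI⟩
          exact ⟨⟨v, h⟩, hI, rfl⟩
        · rintro ⟨⟨u, hu⟩, huI, rfl⟩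
          exact ⟨hu, hu, huI⟩
      have hBset : (B : Set (Vec n)) = Subtype.val '' Iᶜ := by
        ext v
        simp only [hBdef, Finset.coe_filter, Set.mem_setOf_eq, Set.mem_image,
          Set.mem_compl_iff]
        constructor
        · rintro ⟨hv, h, hI⟩
          exact ⟨⟨v, h⟩, hI, rfl⟩
        · rintro ⟨⟨u, hu⟩, huI, rfl⟩
          exact ⟨hu, hu, huI⟩
      have hzA : z ∈ convexHull ℝ (A : Set (Vec n)) := by
        rw [hAset]
        exact hzc
      have hzB : z ∈ convexHull ℝ (B : Set (Vec n)) := by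
        rw [hBset]
        exact hzi
      have hAs : A ⊆ s := Finset.filter_subset _ s
      have hBs : B ⊆ s := Finset.filter_subset _ s
      have hAB : Disjoint A B := by
        rw [Finset.disjoint_left]
        intro v hvA hvB
        rw [hAdef, Finset.mem_filter] at hvA
        rw [hBdef, Finset.mem_filter] at hvB
        obtain ⟨_, h₁, hI₁⟩ := hvA
        obtain ⟨_, h₂, hI₂⟩ := hvB
        exact hI₂ hI₁
      have hA : A.Nonempty := by
        by_contra h
        rw [Finset.not_nonempty_iff_eq_empty] at h
        rw [h] at hzA
        simp at hzA
      have hB : B.Nonempty := by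
        by_contra h
        rw [Finset.not_nonempty_iff_eq_empty] at h
        rw [h] at hzB
        simp at hzB
      rw [decomp s A B hAs hBs hAB hA hB z hzA hzB]
      refine Submodule.sum_mem _ ?_
      intro D hD
      have hDB : D ⊆ B := Finset.mem_powerset.mp (Finset.mem_of_mem_erase hD)
      have hDne : D.Nonempty :=
        Finset.nonempty_of_ne_empty (Finset.ne_of_mem_erase hD)
      refine Submodule.smul_mem _ _ (ih (s \ D) ?_ ?_ ?_)
      · have h1 : (s \ D).card = s.card - D.card :=
          Finset.card_sdiff_of_subset (hDB.trans hBs)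
        have h2 : 0 < D.card := Finset.Nonempty.card_pos hDne
        omega
      · refine hA.mono ?_
        intro a ha
        refine Finset.mem_sdiff.mpr ⟨hAs ha, fun hd => ?_⟩
        exact Finset.disjoint_left.mp hAB ha (hDB hd)
      · exact (Finset.sdiff_subset).trans hsub


lemma isSimplex_convexHull (t : Finset (Vec n)) (htne : t.Nonempty)
    (h : AffineIndependent ℝ (Subtype.val : {v : Vec n // v ∈ t} → Vec n)) :
    IsSimplex (convexHull ℝ (t : Set (Vec n))) := by
  refine ⟨t.card, fun j => ((t.equivFin.symm j : {v : Vec n // v ∈ t}) : Vec n),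
    Finset.card_pos.mpr htne, ?_, ?_⟩
  · exact (affineIndependent_equiv t.equivFin.symm).mpr h
  · have hr : (Set.range fun j => ((t.equivFin.symm j : {v : Vec n // v ∈ t}) : Vec n))
        = (t : Set (Vec n)) := by
      ext w
      constructor
      · rintro ⟨j, rfl⟩
        exact_mod_cast (t.equivFin.symm j).2
      · intro hw
        refine ⟨t.equivFin ⟨w, by exact_mod_cast hw⟩, by simp⟩
    rw [hr]

lemma polyDim_convexHull_mono (t s : Finset (Vec n)) (hsub : t ⊆ s) :
    polyDim (convexHull ℝ (t : Set (Vec n))) ≤ polyDim (convexHull ℝ (s : Set (Vec n))) := by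
  have h1 : affineSpan ℝ (convexHull ℝ (t : Set (Vec n)))
      ≤ affineSpan ℝ (convexHull ℝ (s : Set (Vec n))) := by
    rw [affineSpan_convexHull, affineSpan_convexHull]
    exact affineSpan_mono ℝ (Finset.coe_subset.mpr hsub)
  exact Submodule.finrank_mono (AffineSubspace.direction_le h1)

end SMAux

/-- the support function of a `d`-dimensional polytope is a linear
combination of support functions of simplices of dimension at most `d`. -/
theorem suppFn_eq_linear_combination_of_simplices {n : ℕ} (P : Set (Vec n))
    (hP : IsPolytope P) (d : ℕ) (hdim : polyDim P = d) :
    ∃ (p : ℕ) (β : Fin p → ℝ) (S : Fin p → Set (Vec n)), 0 < p ∧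
      (∀ i, IsSimplex (S i) ∧ polyDim (S i) ≤ d) ∧
      ∀ x, suppFn P x = ∑ i, β i * suppFn (S i) x := by
  classical
  obtain ⟨s, hne, rfl⟩ := hP
  obtain ⟨p, f, g, hsum⟩ := Submodule.mem_span_set'.mp
    (SMAux.span_lemma s s.card s le_rfl hne (subset_refl s))
  have hg : ∀ i : Fin p, ∃ t : Finset (Vec n), t ⊆ s ∧ t.Nonempty ∧
      AffineIndependent ℝ (Subtype.val : {v : Vec n // v ∈ t} → Vec n) ∧
      (g i : (Vec n) → ℝ) = SMAux.Fm t := fun i => (g i).2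
  choose t htsub htne htind hteq using hg
  obtain ⟨v₀, hv₀⟩ := id hne
  have hsing : AffineIndependent ℝ
      (Subtype.val : {v : Vec n // v ∈ ({v₀} : Finset (Vec n))} → Vec n) := by
    have hss : Subsingleton {v : Vec n // v ∈ ({v₀} : Finset (Vec n))} := by
      constructor
      rintro ⟨a, ha⟩ ⟨b, hb⟩
      simp only [Finset.mem_singleton] at ha hb
      subst ha; subst hb; rfl
    exact affineIndependent_of_subsingleton ℝ _
  set t' : Fin (p + 1) → Finset (Vec n) := Fin.cons {v₀} t with ht'
  have ht'sub : ∀ i, t' i ⊆ s := by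
    intro i
    induction i using Fin.cases with
    | zero => simpa [ht', Finset.singleton_subset_iff] using hv₀
    | succ j => simpa [ht'] using htsub j
  have ht'ne : ∀ i, (t' i).Nonempty := by
    intro i
    induction i using Fin.cases with
    | zero => simp [ht']
    | succ j => simpa [ht'] using htne j
  have ht'ind : ∀ i, AffineIndependent ℝ
      (Subtype.val : {v : Vec n // v ∈ t' i} → Vec n) := by
    intro i
    induction i using Fin.cases with
    | zero => exact hsing
    | succ j => exact htind j
  refine ⟨p + 1, (Fin.cons (0:ℝ) f : Fin (p+1) → ℝ),
    fun i => convexHull ℝ ((t' i : Set (Vec n))), Nat.succ_pos p, ?_, ?_⟩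
  · intro i
    refine ⟨SMAux.isSimplex_convexHull (t' i) (ht'ne i) (ht'ind i), ?_⟩
    calc polyDim (convexHull ℝ ((t' i : Set (Vec n))))
        ≤ polyDim (convexHull ℝ ((s : Set (Vec n)))) :=
          SMAux.polyDim_convexHull_mono (t' i) s (ht'sub i)
      _ = d := hdim
  · intro x
    have hS : ∀ j : Fin p,
        suppFn (convexHull ℝ ((t j : Set (Vec n)))) x = (g j : (Vec n) → ℝ) x := by
      intro j
      rw [SMAux.suppFn_convexHull (t j) (htne j) x, hteq j, SMAux.Fm_eq _ (htne j)]
    calc suppFn (convexHull ℝ ((s : Set (Vec n)))) x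
        = SMAux.Fm s x := by
          rw [SMAux.suppFn_convexHull s hne x, SMAux.Fm_eq _ hne]
      _ = (∑ i, f i • (g i : (Vec n) → ℝ)) x := by rw [hsum]
      _ = ∑ i, f i * (g i : (Vec n) → ℝ) x := by
          rw [Finset.sum_apply]
          simp
      _ = ∑ i : Fin (p + 1), (Fin.cons (0:ℝ) f : Fin (p+1) → ℝ) i
            * suppFn (convexHull ℝ ((t' i : Set (Vec n)))) x := by
          rw [Fin.sum_univ_succ]
          have h0 : (Fin.cons (0:ℝ) f : Fin (p+1) → ℝ) 0 = 0 := rfl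
          have hsucc : ∀ j : Fin p, (Fin.cons (0:ℝ) f : Fin (p+1) → ℝ) j.succ = f j :=
            fun j => rfl
          have ht's : ∀ j : Fin p, t' j.succ = t j := fun j => by simp [ht']
          rw [h0, zero_mul, zero_add]
          refine (Finset.sum_congr rfl fun j _ => ?_).symm
          rw [hsucc, ht's, hS j]
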